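/- There exists an F₂-linear subspace C of GF(4)^1365 with dim_{F₂} C = 12 such that C ⊆ C^⊥ with respect to the trace-Hermitian inner product and every nonzero vector of C^⊥ has Hamming weight at least 3. (This is the classical description of a pure quantum stabilizer code [[1365,1353,3]]₂, which is a perfect quantum code: 2^1353 · (1 + 3·1365) = 2^1365.) -/

import Mathlib

open Polynomial Finset

noncomputable section PerfectCodeConstruction

namespace PC

abbrev F4 : Type := GaloisField 2 2
abbrev K12 : Type := GaloisField 2 12

instance : Fintype K12 := Fintype.ofFinite _
instance : Fintype F4 := Fintype.ofFinite _
instance : DecidableEq K12 := Classical.decEq _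
instance : DecidableEq F4 := Classical.decEq _

lemma cardK : Fintype.card K12 = 4096 := by
  have := GaloisField.card 2 12 (by norm_num)
  rwa [Nat.card_eq_fintype_card] at this

lemma cardF : Fintype.card F4 = 4 := by
  have := GaloisField.card 2 2 (by norm_num)
  rwa [Nat.card_eq_fintype_card] at this

lemma cardKu : Fintype.card K12ˣ = 4095 := by
  rw [← Nat.card_eq_fintype_card, Nat.card_units, Nat.card_eq_fintype_card, cardK]

lemma exists_omega : ∃ g : K12ˣ, orderOf g = 3 := by
  apply exists_prime_orderOf_dvd_card 3
  rw [cardKu]; norm_num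

/-- a fixed order-3 unit -/
def gu : K12ˣ := exists_omega.choose

lemma gu_order : orderOf gu = 3 := exists_omega.choose_spec

lemma gu_pow3 : (gu : K12) ^ 3 = 1 := by
  have := pow_orderOf_eq_one gu
  rw [gu_order] at this
  calc (gu : K12) ^ 3 = ((gu ^ 3 : K12ˣ) : K12) := by push_cast; ring
    _ = 1 := by rw [this]; rfl

lemma gu_ne_one : (gu : K12) ≠ 1 := by
  intro h
  have h2 := gu_order
  have : gu = 1 := Units.ext (by rw [h]; rfl)
  rw [this, orderOf_one] at h2
  norm_num at h2

lemma gu_sq_ne_one : (gu : K12) ^ 2 ≠ 1 := by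
  intro h
  have h2 := gu_order
  have : gu ^ 2 = 1 := Units.ext (by push_cast [h]; rfl)
  have := orderOf_dvd_of_pow_eq_one this
  rw [h2] at this
  norm_num at this

lemma gu_sq_ne_gu : (gu : K12) ^ 2 ≠ gu := by
  intro h
  apply gu_ne_one
  have : (gu : K12) ^ 2 * (gu:K12)⁻¹ = (gu:K12) * (gu:K12)⁻¹ := by rw [h]
  rw [mul_inv_cancel₀ (Units.ne_zero gu)] at this
  rw [← this]; field_simp [pow_two]

lemma splits_aux : Splits ((X ^ 2 ^ 2 - X : (ZMod 2)[X]).map (algebraMap (ZMod 2) K12)) := by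
  have hg3 := gu_pow3
  have hgn1 := gu_ne_one
  have hgsq1 := gu_sq_ne_one
  have hgsqg := gu_sq_ne_gu
  have hg0 : (gu : K12) ≠ 0 := Units.ne_zero gu
  set g : K12 := (gu : K12) with hgdef
  have hmap : (X ^ 2 ^ 2 - X : (ZMod 2)[X]).map (algebraMap (ZMod 2) K12)
      = (X ^ 4 - X : K12[X]) := by
    simp [Polynomial.map_sub, Polynomial.map_pow]
  rw [hmap, splits_iff_card_roots]
  have hdeg : (X ^ 4 - X : K12[X]).natDegree = 4 := by
    have := FiniteField.X_pow_card_sub_X_natDegree_eq (K' := K12) (p := 4) (by norm_num)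
    exact this
  have hne : (X ^ 4 - X : K12[X]) ≠ 0 := by
    intro h
    rw [h] at hdeg
    simp at hdeg
  rw [hdeg]
  refine le_antisymm ((Polynomial.card_roots' (X ^ 4 - X : K12[X])).trans_eq hdeg) ?_
  have hroot : ∀ z : K12, z ^ 4 = z → z ∈ (X ^ 4 - X : K12[X]).roots := by
    intro z hz
    rw [mem_roots hne]
    simp [IsRoot, hz, sub_eq_zero]
  have hsub : ({0, 1, g, g^2} : Finset K12) ⊆ (X ^ 4 - X : K12[X]).roots.toFinset := by
    intro z hz
    rw [Multiset.mem_toFinset]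
    simp only [Finset.mem_insert, Finset.mem_singleton] at hz
    rcases hz with rfl|rfl|rfl|rfl
    · exact hroot _ (by ring)
    · exact hroot _ (by ring)
    · apply hroot; rw [show (4:ℕ)=3+1 from rfl, pow_add, hg3, one_mul, pow_one]
    · apply hroot; rw [← pow_mul, show 2*4=2+3*2 from rfl, pow_add, pow_mul, hg3, one_pow, mul_one]
  have hcard : ({0, 1, g, g^2} : Finset K12).card = 4 := by
    rw [Finset.card_insert_of_notMem, Finset.card_insert_of_notMem,
      Finset.card_insert_of_notMem, Finset.card_singleton]
    · simp [Ne.symm hgsqg]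
    · simp [Ne.symm hgn1, Ne.symm hgsq1]
    · simp [Ne.symm hg0, (pow_ne_zero 2 hg0).symm]
  calc (4:ℕ) = ({0, 1, g, g^2} : Finset K12).card := hcard.symm
    _ ≤ (X ^ 4 - X : K12[X]).roots.toFinset.card := Finset.card_le_card hsub
    _ ≤ Multiset.card (X ^ 4 - X : K12[X]).roots := Multiset.toFinset_card_le _

/-- the embedding of GF(4) into GF(4096) -/
def iotaA : F4 →ₐ[ZMod 2] K12 :=
  @IsSplittingField.lift _ _ F4 _ _ _ _ _ (X ^ 2 ^ 2 - X : (ZMod 2)[X])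
    (instIsSplittingFieldZModGaloisFieldHSubPolynomialHPowNatX 2 2) splits_aux

def iota : F4 →+* K12 := (iotaA : F4 →+* K12)

lemma iota_inj : Function.Injective iota := iota.injective

lemma F4_pow4 (a : F4) : a ^ 4 = a := by
  have := FiniteField.pow_card a
  rwa [cardF] at this

lemma iota_pow4 (a : F4) : iota a ^ 4 = iota a := by
  rw [← map_pow, F4_pow4]

/-- every fourth-power-fixed element of K12 is in the range of iota -/
lemma mem_range_iota (z : K12) (hz : z ^ 4 = z) : ∃ a : F4, iota a = z := by
  classical
  set R : Finset K12 := Finset.univ.filter (fun z => z ^ 4 = z) with hR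
  have hdeg : (X ^ 4 - X : K12[X]).natDegree = 4 :=
    FiniteField.X_pow_card_sub_X_natDegree_eq (K' := K12) (p := 4) (by norm_num)
  have hne : (X ^ 4 - X : K12[X]) ≠ 0 := by
    intro h; rw [h] at hdeg; simp at hdeg
  have hRsub : R ⊆ (X ^ 4 - X : K12[X]).roots.toFinset := by
    intro w hw
    rw [hR, Finset.mem_filter] at hw
    rw [Multiset.mem_toFinset, mem_roots hne]
    simp [IsRoot, hw.2, sub_eq_zero]
  have hRcard : R.card ≤ 4 := by
    calc R.card ≤ (X ^ 4 - X : K12[X]).roots.toFinset.card := Finset.card_le_card hRsub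
      _ ≤ Multiset.card (X ^ 4 - X : K12[X]).roots := Multiset.toFinset_card_le _
      _ ≤ 4 := (Polynomial.card_roots' _).trans_eq hdeg
  have himg : (Finset.univ.image iota) ⊆ R := by
    intro w hw
    rw [Finset.mem_image] at hw
    obtain ⟨a, _, rfl⟩ := hw
    rw [hR, Finset.mem_filter]
    exact ⟨Finset.mem_univ _, iota_pow4 a⟩
  have hicard : (Finset.univ.image iota).card = 4 := by
    rw [Finset.card_image_of_injective _ iota_inj, Finset.card_univ, cardF]
  have hEq : Finset.univ.image iota = R :=
    Finset.eq_of_subset_of_card_le himg (by omega)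
  have hzR : z ∈ R := by rw [hR, Finset.mem_filter]; exact ⟨Finset.mem_univ _, hz⟩
  rw [← hEq, Finset.mem_image] at hzR
  obtain ⟨a, _, ha⟩ := hzR
  exact ⟨a, ha⟩

/-! ### the trace map -/

/-- trace from K12 to (the copy of) GF(4) -/
def TrK (y : K12) : K12 := ∑ j ∈ Finset.range 6, y ^ 4 ^ j

lemma pow4j_add (a b : K12) (j : ℕ) : (a + b) ^ 4 ^ j = a ^ 4 ^ j + b ^ 4 ^ j := by
  have h : (4 : ℕ) ^ j = 2 ^ (2 * j) := by rw [pow_mul]; norm_num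
  rw [h]
  exact add_pow_char_pow a b 2 (2*j)

lemma pow4j_fixed {w : K12} (hw : w ^ 4 = w) (j : ℕ) : w ^ 4 ^ j = w := by
  induction j with
  | zero => simp
  | succ n ih => rw [pow_succ, pow_mul, ih, hw]

lemma TrK_add (a b : K12) : TrK (a + b) = TrK a + TrK b := by
  rw [TrK, TrK, TrK, ← Finset.sum_add_distrib]
  exact Finset.sum_congr rfl fun j _ => pow4j_add a b j

lemma TrK_zero : TrK 0 = 0 := by
  rw [TrK]
  apply Finset.sum_eq_zero
  intro j _
  exact zero_pow (by positivity)

lemma TrK_smul {l : K12} (hl : l ^ 4 = l) (y : K12) : TrK (l * y) = l * TrK y := by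
  rw [TrK, TrK, Finset.mul_sum]
  refine Finset.sum_congr rfl fun j _ => ?_
  rw [mul_pow, pow4j_fixed hl]

lemma K12_pow_card (y : K12) : y ^ 4096 = y := by
  have := FiniteField.pow_card y
  rwa [cardK] at this

lemma TrK_pow4 (y : K12) : TrK y ^ 4 = TrK y := by
  have h4 : (4:ℕ) = 2 ^ 2 := rfl
  have hsq : TrK y ^ 4 = ∑ j ∈ Finset.range 6, (y ^ 4 ^ j) ^ 4 := by
    rw [TrK, h4, sum_pow_char_pow]
  rw [hsq]
  have h1 : ∀ j, (y ^ 4 ^ j) ^ 4 = y ^ 4 ^ (j + 1) := by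
    intro j; rw [← pow_mul, ← pow_succ]
  simp_rw [h1]
  have h2 : ∑ j ∈ Finset.range 6, y ^ 4 ^ (j+1)
      = ∑ j ∈ Finset.range 7, y ^ 4 ^ j - y ^ 4 ^ 0 := by
    rw [Finset.sum_range_succ' (fun j => y ^ 4 ^ j) 6]
    ring
  rw [h2, Finset.sum_range_succ]
  have : y ^ 4 ^ 6 = y := by norm_num; exact K12_pow_card y
  rw [this, TrK]
  ring


lemma exists_TrK_ne_zero : ∃ y : K12, TrK y ≠ 0 := by
  by_contra h
  push_neg at h
  set P : K12[X] := ∑ j ∈ Finset.range 6, (X : K12[X]) ^ 4 ^ j with hP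
  have heval : ∀ y : K12, P.eval y = TrK y := by
    intro y
    rw [hP, TrK, Polynomial.eval_finset_sum]
    simp
  have hdeg : P.natDegree ≤ 1024 := by
    rw [hP]
    apply Polynomial.natDegree_sum_le_of_forall_le
    intro j hj
    rw [Polynomial.natDegree_X_pow]
    calc (4:ℕ) ^ j ≤ 4 ^ 5 := Nat.pow_le_pow_right (by norm_num) (by
      rw [Finset.mem_range] at hj; omega)
      _ = 1024 := by norm_num
  have hP0 : P = 0 := by
    apply Polynomial.eq_zero_of_natDegree_lt_card_of_eval_eq_zero P (f := id)
      Function.injective_id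
    · intro y; rw [id, heval]; exact h y
    · rw [cardK]; omega
  have hcoeff : P.coeff 1024 = 1 := by
    rw [hP, Polynomial.finset_sum_coeff]
    simp only [Polynomial.coeff_X_pow]
    rw [show (6:ℕ) = 5+1 from rfl, Finset.sum_range_succ, if_pos (by norm_num)]
    have hz : (∑ j ∈ Finset.range 5, if (1024:ℕ) = 4 ^ j then (1:K12) else 0) = 0 := by
      apply Finset.sum_eq_zero
      intro j hj
      rw [Finset.mem_range] at hj
      have : (4:ℕ) ^ j < 1024 := by
        calc (4:ℕ) ^ j ≤ 4 ^ 4 := Nat.pow_le_pow_right (by norm_num) (by omega)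
          _ < 1024 := by norm_num
      rw [if_neg (by omega)]
    rw [hz, zero_add]
  rw [hP0] at hcoeff
  simp at hcoeff


/-! ### the subgroup and quotient -/

/-- the image of GF(4)ˣ inside K12ˣ -/
def H : Subgroup K12ˣ := MonoidHom.range (Units.map (iota : F4 →* K12))

lemma mem_H_iff {u : K12ˣ} : u ∈ H ↔ ∃ a : F4, a ≠ 0 ∧ iota a = (u : K12) := by
  constructor
  · rintro ⟨a, rfl⟩
    exact ⟨(a : F4), a.ne_zero, rfl⟩
  · rintro ⟨a, ha0, ha⟩
    refine ⟨Units.mk0 a ha0, Units.ext ?_⟩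
    simpa using ha

lemma H_pow3 {u : K12ˣ} (hu : u ∈ H) : (u : K12) ^ 3 = 1 := by
  rw [mem_H_iff] at hu
  obtain ⟨a, ha0, ha⟩ := hu
  have h4 := F4_pow4 a
  have : a ^ 3 = 1 := by
    have hstep : a ^ 3 * a = 1 * a := by rw [one_mul, ← pow_succ]; exact h4
    exact mul_right_cancel₀ ha0 hstep
  rw [← ha, ← map_pow, this, map_one]

lemma H_pow4 {u : K12ˣ} (hu : u ∈ H) : (u : K12) ^ 4 = (u : K12) := by
  rw [show (4:ℕ) = 3+1 from rfl, pow_add, H_pow3 hu, one_mul, pow_one]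

instance : Fintype H := Fintype.ofFinite _

lemma cardH : Nat.card H = 3 := by
  have hinj : Function.Injective (Units.map (iota : F4 →* K12)) :=
    Units.map_injective iota_inj
  have : Nat.card H = Nat.card F4ˣ := Nat.card_range_of_injective hinj
  rw [this, Nat.card_units, Nat.card_eq_fintype_card, cardF]

/-- the quotient indexing projective points -/
abbrev Q : Type := K12ˣ ⧸ H

instance : Fintype Q := Fintype.ofFinite _

lemma cardQ : Nat.card Q = 1365 := by
  have h := Subgroup.card_eq_card_quotient_mul_card_subgroup H
  rw [cardH] at h
  have h2 : Nat.card K12ˣ = 4095 := by rw [Nat.card_eq_fintype_card, cardKu]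
  rw [h2] at h
  show Nat.card (K12ˣ ⧸ H) = 1365
  omega

/-- indexing of projective points by Fin 1365 -/
def e : Fin 1365 ≃ Q :=
  (Fintype.equivFinOfCardEq (by rw [← Nat.card_eq_fintype_card, cardQ])).symm

/-- coset representatives -/
def xu (i : Fin 1365) : K12ˣ := (e i).out

def xv (i : Fin 1365) : K12 := (xu i : K12)

lemma xv_ne_zero (i : Fin 1365) : xv i ≠ 0 := Units.ne_zero _

lemma mk_xu (i : Fin 1365) : QuotientGroup.mk (xu i) = e i := Quotient.out_eq' _

lemma rep_eq (i j : Fin 1365) (h : K12ˣ) (hh : h ∈ H) (heq : xu i * h = xu j) : i = j := by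
  have h1 : QuotientGroup.mk (s := H) (xu i * h) = QuotientGroup.mk (xu i) :=
    QuotientGroup.mk_mul_of_mem (xu i) hh
  rw [heq, mk_xu, mk_xu] at h1
  exact e.injective h1.symm

lemma rep_eq' (i j : Fin 1365) (a : F4) (ha : a ≠ 0) (heq : xv i * iota a = xv j) : i = j := by
  have hu : (Units.mk0 (iota a) (by
      intro h0
      exact ha (iota_inj (by rw [h0, map_zero])))) ∈ H := by
    rw [mem_H_iff]
    exact ⟨a, ha, rfl⟩
  apply rep_eq i j _ hu
  apply Units.ext
  push_cast
  exact heq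

/-- the multiplication bijection `Fin 1365 × H ≃ K12ˣ` -/
lemma mul_bij : Function.Bijective (fun p : Fin 1365 × H => xu p.1 * (p.2 : K12ˣ)) := by
  rw [Fintype.bijective_iff_injective_and_card]
  constructor
  · rintro ⟨i, h⟩ ⟨j, h'⟩ heq
    simp only at heq
    have hij : i = j := by
      apply rep_eq i j ((h : K12ˣ) * (h' : K12ˣ)⁻¹) (H.mul_mem h.2 (H.inv_mem h'.2))
      rw [← mul_assoc, heq, mul_assoc, mul_inv_cancel, mul_one]
    subst hij
    have : (h : K12ˣ) = h' := mul_left_cancel heq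
    simp [Prod.ext_iff, Subtype.ext this]
  · rw [Fintype.card_prod, Fintype.card_fin, ← Nat.card_eq_fintype_card (α := H), cardH, cardKu]

lemma key_sum (m : ℕ) (h3 : 3 ∣ m) (h0 : 0 < m) (hlt : m < 4095) :
    ∑ i : Fin 1365, xv i ^ m = 0 := by
  have hsum : ∑ u : K12ˣ, (u : K12) ^ m = ∑ p : Fin 1365 × H, ((xu p.1 * (p.2 : K12ˣ) : K12ˣ) : K12) ^ m :=
    (Fintype.sum_bijective _ mul_bij _ _ (fun p => rfl)).symm
  have hunits : ∑ u : K12ˣ, (u : K12) ^ m = 0 := by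
    have := FiniteField.sum_pow_units K12 m
    rw [cardK] at this
    rw [this, if_neg]
    intro hdvd
    have := Nat.le_of_dvd h0 hdvd
    omega
  have hterm : ∀ p : Fin 1365 × H, ((xu p.1 * (p.2 : K12ˣ) : K12ˣ) : K12) ^ m = xv p.1 ^ m := by
    rintro ⟨i, h⟩
    obtain ⟨k, rfl⟩ := h3
    push_cast
    rw [mul_pow]
    have hone : ((h : K12ˣ) : K12) ^ (3 * k) = 1 := by
      rw [pow_mul, H_pow3 h.2, one_pow]
    rw [hone, mul_one]
    rfl
  rw [hsum] at hunits
  simp_rw [hterm] at hunits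
  rw [Fintype.sum_prod_type] at hunits
  have hcard : ∀ i : Fin 1365, ∑ _h : H, xv i ^ m = 3 * xv i ^ m := by
    intro i
    rw [Finset.sum_const, Finset.card_univ, ← Nat.card_eq_fintype_card, cardH]
    rw [nsmul_eq_mul]
    norm_num
  simp_rw [hcard] at hunits
  have h3eq : (3 : K12) = 1 := by
    have h2 : (2 : K12) = 0 := by
      have : ((2:ℕ) : K12) = 0 := CharP.cast_eq_zero K12 2
      simpa using this
    have : (3 : K12) = 2 + 1 := by norm_num
    rw [this, h2, zero_add]
  simp_rw [h3eq, one_mul] at hunits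
  exact hunits


/-! ### the code -/

def tau (y : K12) : F4 := Function.invFun iota (TrK y)

lemma iota_tau (y : K12) : iota (tau y) = TrK y := by
  obtain ⟨a, ha⟩ := mem_range_iota (TrK y) (TrK_pow4 y)
  exact Function.invFun_eq ⟨a, ha⟩

/-- codewords -/
def cw (α : K12) : Fin 1365 → F4 := fun i => tau (α * xv i)

lemma iota_cw (α : K12) (i : Fin 1365) : iota (cw α i) = TrK (α * xv i) := iota_tau _

/-- the syndrome of a vector -/
def Sv (v : Fin 1365 → F4) : K12 := ∑ i, xv i * iota (v i) ^ 2

lemma pow4j_sum {ι : Type*} (s : Finset ι) (f : ι → K12) (j : ℕ) :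
    (∑ i ∈ s, f i) ^ 4 ^ j = ∑ i ∈ s, f i ^ 4 ^ j := by
  have h : (4 : ℕ) ^ j = 2 ^ (2 * j) := by rw [pow_mul]; norm_num
  rw [h]
  exact sum_pow_char_pow 2 (2 * j) s f

lemma sq_sum {ι : Type*} (s : Finset ι) (f : ι → K12) :
    (∑ i ∈ s, f i) ^ 2 = ∑ i ∈ s, f i ^ 2 :=
  sum_pow_char 2 s f

lemma term_id (a x w : K12) (hw : w ^ 4 = w) (j : ℕ) :
    (a * (x * w ^ 2)) ^ 4 ^ j + ((a * (x * w ^ 2)) ^ 4 ^ j) ^ 2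
      = (a * x) ^ 4 ^ j * w ^ 2 + ((a * x) ^ 4 ^ j) ^ 2 * w := by
  have h1 : (a * (x * w ^ 2)) ^ 4 ^ j = (a * x) ^ 4 ^ j * w ^ 2 := by
    rw [show a * (x * w ^ 2) = a * x * w ^ 2 by ring, mul_pow]
    congr 1
    rw [← pow_mul, mul_comm 2 (4 ^ j), pow_mul, pow4j_fixed hw]
  have h2 : ((a * x) ^ 4 ^ j * w ^ 2) ^ 2 = ((a * x) ^ 4 ^ j) ^ 2 * w := by
    rw [mul_pow]
    congr 1
    rw [← pow_mul, show (2 * 2 : ℕ) = 4 from rfl]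
    exact hw
  rw [h1, h2]

lemma inner_iota (α : K12) (v : Fin 1365 → F4) :
    iota (∑ i, (cw α i * v i ^ 2 + cw α i ^ 2 * v i))
      = TrK (α * Sv v) + TrK (α * Sv v) ^ 2 := by
  rw [map_sum]
  have hterm : ∀ i : Fin 1365, iota (cw α i * v i ^ 2 + cw α i ^ 2 * v i)
      = TrK (α * xv i) * iota (v i) ^ 2 + TrK (α * xv i) ^ 2 * iota (v i) := by
    intro i
    rw [map_add, map_mul, map_mul, map_pow, map_pow, iota_cw]
  have hsum_pow : ∀ j : ℕ, (α * Sv v) ^ 4 ^ j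
      = ∑ i : Fin 1365, (α * (xv i * iota (v i) ^ 2)) ^ 4 ^ j := by
    intro j
    rw [Sv, Finset.mul_sum, pow4j_sum]
  have hR : TrK (α * Sv v) + TrK (α * Sv v) ^ 2
      = ∑ j ∈ Finset.range 6, ∑ i : Fin 1365,
          ((α * (xv i * iota (v i) ^ 2)) ^ 4 ^ j
            + ((α * (xv i * iota (v i) ^ 2)) ^ 4 ^ j) ^ 2) := by
    rw [TrK, sq_sum, ← Finset.sum_add_distrib]
    refine Finset.sum_congr rfl fun j _ => ?_
    rw [hsum_pow j, sq_sum, ← Finset.sum_add_distrib]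
  rw [hR, Finset.sum_comm]
  refine Finset.sum_congr rfl fun i _ => ?_
  rw [hterm i, TrK, Finset.sum_mul, sq_sum, Finset.sum_mul, ← Finset.sum_add_distrib]
  refine Finset.sum_congr rfl fun j _ => ?_
  rw [term_id α (xv i) (iota (v i)) (iota_pow4 (v i)) j, mul_pow]

lemma dvd_key (j : ℕ) : 3 ∣ 1 + 2 * 4 ^ j := by
  induction j with
  | zero => norm_num
  | succ n ih =>
    obtain ⟨k, hk⟩ := ih
    exact ⟨4 * k - 1, by rw [pow_succ]; omega⟩

lemma S_of_cw (β : K12) : Sv (cw β) = 0 := by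
  rw [Sv]
  have hterm : ∀ i : Fin 1365, xv i * iota (cw β i) ^ 2
      = ∑ j ∈ Finset.range 6, β ^ (2 * 4 ^ j) * xv i ^ (1 + 2 * 4 ^ j) := by
    intro i
    rw [iota_cw, TrK, sq_sum, Finset.mul_sum]
    refine Finset.sum_congr rfl fun j _ => ?_
    rw [← pow_mul, mul_pow]
    ring
  simp_rw [hterm]
  rw [Finset.sum_comm]
  apply Finset.sum_eq_zero
  intro j hj
  rw [← Finset.mul_sum, key_sum (1 + 2 * 4 ^ j) (dvd_key j) (by positivity) ?_, mul_zero]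
  rw [Finset.mem_range] at hj
  have : (4:ℕ) ^ j ≤ 1024 := by
    calc (4:ℕ) ^ j ≤ 4 ^ 5 := Nat.pow_le_pow_right (by norm_num) (by omega)
      _ = 1024 := by norm_num
  omega

lemma exists_nontrivial_a : ∃ a : F4, a ≠ 0 ∧ a ≠ 1 := by
  by_contra h
  push_neg at h
  have hsub : (Finset.univ : Finset F4) ⊆ ({0, 1} : Finset F4) := by
    intro a _
    rcases eq_or_ne a 0 with rfl | ha
    · simp
    · simp [h a ha]
  have h1 := Finset.card_le_card hsub
  rw [Finset.card_univ, cardF] at h1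
  have h2 : ({0, 1} : Finset F4).card ≤ 2 := Finset.card_insert_le _ _ |>.trans (by simp)
  omega

lemma S_eq_zero_of_orth (v : Fin 1365 → F4)
    (hv : ∀ α : K12, ∑ i, (cw α i * v i ^ 2 + cw α i ^ 2 * v i) = 0) : Sv v = 0 := by
  by_contra hS
  have key : ∀ α : K12, TrK (α * Sv v) + TrK (α * Sv v) ^ 2 = 0 := by
    intro α
    rw [← inner_iota, hv, map_zero]
  obtain ⟨y, hy⟩ := exists_TrK_ne_zero
  obtain ⟨a, ha0, ha1⟩ := exists_nontrivial_a
  set t := TrK y with ht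
  have h1 : y * (Sv v)⁻¹ * Sv v = y := by
    rw [mul_assoc, inv_mul_cancel₀ hS, mul_one]
  have ht0 := key (y * (Sv v)⁻¹)
  rw [h1, ← ht] at ht0
  have ht1 : t = 1 := by
    have hfac : t * (1 + t) = 0 := by linear_combination ht0
    rcases mul_eq_zero.mp hfac with h | h
    · exact absurd h hy
    · have : t = -1 := by linear_combination h
      rw [this, CharTwo.neg_eq]
  set w := iota a with hwdef
  have hw4 : w ^ 4 = w := iota_pow4 a
  have h2 : w * y * (Sv v)⁻¹ * Sv v = w * y := by
    rw [mul_assoc, mul_assoc, inv_mul_cancel₀ hS, mul_one]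
  have hw0 := key (w * y * (Sv v)⁻¹)
  rw [h2, TrK_smul hw4, ← ht, ht1, mul_one] at hw0
  have hw2 : w ^ 2 = w := by
    have : w ^ 2 = -w := by linear_combination hw0
    rw [this, CharTwo.neg_eq]
  have ha2 : a ^ 2 = a := iota_inj (by rw [map_pow]; exact hw2)
  have : a * (a - 1) = 0 := by linear_combination ha2
  rcases mul_eq_zero.mp this with h | h
  · exact ha0 h
  · exact ha1 (by linear_combination h)


lemma selforth (α β : K12) : ∑ i, (cw α i * cw β i ^ 2 + cw α i ^ 2 * cw β i) = 0 := by
  have hid := inner_iota α (cw β)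
  rw [S_of_cw, mul_zero, TrK_zero] at hid
  apply iota_inj
  rw [map_zero, hid]
  norm_num

/-! ### linear structure -/

lemma cw_add (a b : K12) : cw (a + b) = cw a + cw b := by
  funext i
  apply iota_inj
  rw [Pi.add_apply, map_add, iota_cw, iota_cw, iota_cw, add_mul, TrK_add]

def phi0 : K12 →+ (Fin 1365 → F4) := AddMonoidHom.mk' cw cw_add

def phi : K12 →ₗ[ZMod 2] (Fin 1365 → F4) := phi0.toZModLinearMap 2

lemma phi_apply (α : K12) : phi α = cw α := rfl

/-- the code -/
def CC : Submodule (ZMod 2) (Fin 1365 → F4) := LinearMap.range phi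

lemma mem_CC {u : Fin 1365 → F4} : u ∈ CC ↔ ∃ α : K12, cw α = u := by
  rw [CC, LinearMap.mem_range]
  rfl

lemma TrK_vanish_of_cw_zero {α : K12} (h : cw α = 0) (y : K12) : TrK (α * y) = 0 := by
  rcases eq_or_ne y 0 with rfl | hy
  · rw [mul_zero, TrK_zero]
  · set uy : K12ˣ := Units.mk0 y hy with huy
    set q : Q := QuotientGroup.mk uy with hq
    set i : Fin 1365 := e.symm q with hi
    have hmk : QuotientGroup.mk (s := H) (xu i) = QuotientGroup.mk uy := by
      rw [mk_xu, hi, Equiv.apply_symm_apply, hq]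
    rw [QuotientGroup.eq] at hmk
    set h' : K12ˣ := (xu i)⁻¹ * uy with hh'
    have hyx : y = xv i * (h' : K12) := by
      rw [hh', xv]
      push_cast
      rw [← mul_assoc, mul_inv_cancel₀ (Units.ne_zero (xu i)), one_mul]
      rfl
    have hTri : TrK (α * xv i) = 0 := by
      have := congrFun h i
      rw [Pi.zero_apply] at this
      rw [← iota_cw, this, map_zero]
    rw [hyx, show α * (xv i * (h' : K12)) = (h' : K12) * (α * xv i) by ring,
      TrK_smul (H_pow4 hmk), hTri, mul_zero]

lemma cw_eq_zero {α : K12} (h : cw α = 0) : α = 0 := by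
  by_contra hα
  obtain ⟨y, hy⟩ := exists_TrK_ne_zero
  apply hy
  have := TrK_vanish_of_cw_zero h (α⁻¹ * y)
  rwa [← mul_assoc, mul_inv_cancel₀ hα, one_mul] at this

lemma finrank_CC : Module.finrank (ZMod 2) CC = 12 := by
  have hinj : Function.Injective phi := by
    rw [injective_iff_map_eq_zero]
    intro a ha
    exact cw_eq_zero ha
  rw [CC, LinearMap.finrank_range_of_inj hinj]
  exact GaloisField.finrank 2 (by norm_num)

/-! ### minimum distance -/

lemma dist_three (v : Fin 1365 → F4)
    (hv : ∀ u ∈ CC, ∑ i, (u i * v i ^ 2 + u i ^ 2 * v i) = 0) (hv0 : v ≠ 0) :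
    3 ≤ Nat.card {i : Fin 1365 | v i ≠ 0} := by
  classical
  have hS : Sv v = 0 := by
    apply S_eq_zero_of_orth
    intro α
    exact hv (cw α) (mem_CC.mpr ⟨α, rfl⟩)
  set s : Finset (Fin 1365) := Finset.univ.filter (fun i => v i ≠ 0) with hs
  have hcount : Nat.card {i : Fin 1365 | v i ≠ 0} = s.card := by
    rw [Nat.card_coe_set_eq, Set.ncard_eq_toFinset_card', Set.toFinset_setOf]
  rw [hcount]
  by_contra hlt
  push_neg at hlt
  have hcard2 : s.card ≤ 2 := by omega
  have hiota_ne : ∀ i ∈ s, iota (v i) ≠ 0 := by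
    intro i hi h0
    rw [hs, Finset.mem_filter] at hi
    exact hi.2 (iota_inj (by rw [h0, map_zero]))
  have hSsum : ∑ i ∈ s, xv i * iota (v i) ^ 2 = 0 := by
    rw [← hS, Sv, hs]
    rw [Finset.sum_filter_of_ne]
    intro i _ hne
    intro h0
    apply hne
    rw [h0, map_zero, zero_pow (by norm_num : (2:ℕ) ≠ 0), mul_zero]
  have hne : s.Nonempty := by
    obtain ⟨i, hi⟩ : ∃ i, v i ≠ 0 := by
      by_contra hall
      push_neg at hall
      exact hv0 (funext hall)
    exact ⟨i, by rw [hs, Finset.mem_filter]; exact ⟨Finset.mem_univ _, hi⟩⟩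
  have h1 : 1 ≤ s.card := Finset.card_pos.mpr hne
  interval_cases hsc : s.card
  · -- card = 1
    obtain ⟨i, hi⟩ := Finset.card_eq_one.mp hsc
    rw [hi, Finset.sum_singleton] at hSsum
    have hvi : iota (v i) ≠ 0 := hiota_ne i (by rw [hi]; simp)
    exact (mul_ne_zero (xv_ne_zero i) (pow_ne_zero 2 hvi)) hSsum
  · -- card = 2
    obtain ⟨i, j, hij, hij2⟩ := Finset.card_eq_two.mp hsc
    have hi : i ∈ s := by rw [hij2]; simp
    have hj : j ∈ s := by rw [hij2]; simp
    rw [hij2, Finset.sum_pair hij] at hSsum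
    have heq : xv i * iota (v i) ^ 2 = xv j * iota (v j) ^ 2 := by
      have := eq_neg_of_add_eq_zero_left hSsum
      rwa [CharTwo.neg_eq] at this
    have hvi := hiota_ne i hi
    have hvj := hiota_ne j hj
    have hvine : v i ≠ 0 := fun h0 => hvi (by rw [h0, map_zero])
    have hvjne : v j ≠ 0 := fun h0 => hvj (by rw [h0, map_zero])
    set a : F4 := (v i * (v j)⁻¹) ^ 2 with ha
    have ha0 : a ≠ 0 := pow_ne_zero _ (mul_ne_zero hvine (inv_ne_zero hvjne))
    have hkey : xv i * iota a = xv j := by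
      have hfe : a * v j ^ 2 = v i ^ 2 := by
        rw [ha, mul_pow, mul_assoc, ← mul_pow, inv_mul_cancel₀ hvjne, one_pow, mul_one]
      have hcancel : iota a * iota (v j) ^ 2 = iota (v i) ^ 2 := by
        rw [← map_pow, ← map_mul, hfe, map_pow]
      have hstep : (xv i * iota a) * iota (v j) ^ 2 = xv j * iota (v j) ^ 2 := by
        rw [mul_assoc, hcancel, heq]
      exact mul_right_cancel₀ (pow_ne_zero 2 hvj) hstep
    exact hij (rep_eq' i j a ha0 hkey)

end PC
end PerfectCodeConstruction

/-- **The perfect quantum code `[[1365,1353,3]]₂`.**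
There is an `𝔽₂`-linear subspace `C ⊆ GF(4)^1365` of `𝔽₂`-dimension `12` that is
self-orthogonal with respect to the trace-Hermitian inner product
`⟨u,v⟩ = ∑ i, (uᵢvᵢ² + uᵢ²vᵢ)`, and such that every nonzero vector of its trace-Hermitian dual
has Hamming weight at least `3`. -/
theorem exists_perfect_code_1365_1353_3 :
    ∃ C : Submodule (ZMod 2) (Fin 1365 → GaloisField 2 2),
      Module.finrank (ZMod 2) C = 12 ∧
      (∀ u ∈ C, ∀ v ∈ C, ∑ i, (u i * v i ^ 2 + u i ^ 2 * v i) = 0) ∧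
      (∀ v : Fin 1365 → GaloisField 2 2,
        (∀ u ∈ C, ∑ i, (u i * v i ^ 2 + u i ^ 2 * v i) = 0) →
        v ≠ 0 → 3 ≤ Nat.card {i : Fin 1365 | v i ≠ 0}) := by
  refine ⟨PC.CC, PC.finrank_CC, ?_, ?_⟩
  · intro u hu v hv
    obtain ⟨α, rfl⟩ := PC.mem_CC.mp hu
    obtain ⟨β, rfl⟩ := PC.mem_CC.mp hv
    exact PC.selforth α β
  · intro v hv hv0
    exact PC.dist_three v hv hv0
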